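/- Let 𝔤 = 𝔤^{1,𝔥} = (ℝ ⊕ 𝔥) ⋉ ℝⁿ ⊆ 𝔰𝔦𝔪(n) with 𝔥 ⊆ 𝔰𝔬(n). Given λ ∈ ℝ, e ∈ ℝⁿ, R₀ : Λ²ℝⁿ → 𝔥 a linear map satisfying the first Bianchi identity, P ∈ 𝒫(𝔥), and T a symmetric bilinear form on ℝⁿ identified with an endomorphism, define R : Λ²ℝ^{1,n+1} → 𝔤 by R(p,q) = (λ,0,e), R(X,Y) = (0, R₀(X,Y), P(Y)X − P(X)Y), R(X,q) = (g(e,X), P(X), T(X)), R(p,X) = 0 for X,Y ∈ E = ℝⁿ. Then R satisfies the first Bianchi identity: R(U,V)W + R(V,W)U + R(W,U)V = 0 for all U,V,W ∈ ℝ^{1,n+1}. -/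
import Mathlib


open scoped RealInnerProductSpace BigOperators

noncomputable section

/-- The endomorphism of `ℝ^{1,n+1} = ℝ × ℝⁿ × ℝ` (coordinates `(v_p, v_E, v_q)` in the Witt
basis `p, X₁, …, Xₙ, q`) corresponding to the matrix `(a, A, X) ∈ 𝔰𝔦𝔪(n)` of the paper:
`p ↦ a·p`, `Y ↦ g(X,Y)·p + A·Y` for `Y ∈ E`, `q ↦ −X − a·q`. -/
def simMat (n : ℕ) (a : ℝ) (A : EuclideanSpace ℝ (Fin n) →ₗ[ℝ] EuclideanSpace ℝ (Fin n))
    (Xv : EuclideanSpace ℝ (Fin n)) :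
    (ℝ × EuclideanSpace ℝ (Fin n) × ℝ) → (ℝ × EuclideanSpace ℝ (Fin n) × ℝ) :=
  fun v => (a * v.1 + ⟪Xv, v.2.1⟫, A v.2.1 - v.2.2 • Xv, -(a * v.2.2))

/-- The algebraic curvature tensor `R = R(λ, e, R₀, P, T)` of type `𝔤^{1,𝔥}`, determined by
`R(p,q) = (λ,0,e)`, `R(X,Y) = (0, R₀(X,Y), P(Y)X − P(X)Y)`, `R(X,q) = (g(e,X), P(X), T(X))`,
`R(p,X) = 0` for `X, Y ∈ E = ℝⁿ`, extended bilinearly. -/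
def Rfun (n : ℕ) (lam : ℝ) (ev : EuclideanSpace ℝ (Fin n))
    (R0 : EuclideanSpace ℝ (Fin n) →ₗ[ℝ] EuclideanSpace ℝ (Fin n) →ₗ[ℝ]
      EuclideanSpace ℝ (Fin n) →ₗ[ℝ] EuclideanSpace ℝ (Fin n))
    (P : EuclideanSpace ℝ (Fin n) →ₗ[ℝ]
      EuclideanSpace ℝ (Fin n) →ₗ[ℝ] EuclideanSpace ℝ (Fin n))
    (T : EuclideanSpace ℝ (Fin n) →ₗ[ℝ] EuclideanSpace ℝ (Fin n))
    (U V : ℝ × EuclideanSpace ℝ (Fin n) × ℝ) :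
    (ℝ × EuclideanSpace ℝ (Fin n) × ℝ) → (ℝ × EuclideanSpace ℝ (Fin n) × ℝ) :=
  simMat n
    ((U.1 * V.2.2 - U.2.2 * V.1) * lam + V.2.2 * ⟪ev, U.2.1⟫ - U.2.2 * ⟪ev, V.2.1⟫)
    (R0 U.2.1 V.2.1 + V.2.2 • P U.2.1 - U.2.2 • P V.2.1)
    ((U.1 * V.2.2 - U.2.2 * V.1) • ev + (P V.2.1 U.2.1 - P U.2.1 V.2.1)
      + V.2.2 • T U.2.1 - U.2.2 • T V.2.1)

/-- For `𝔤 = 𝔤^{1,𝔥} = (ℝ ⊕ 𝔥) ⋉ ℝⁿ ⊆ 𝔰𝔦𝔪(n)` and data `λ ∈ ℝ`, `e ∈ ℝⁿ`,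
`R₀ ∈ 𝓡(𝔥)` (skew in its two arguments, values skew-symmetric, first Bianchi identity),
`P ∈ 𝒫(𝔥)` (values skew-symmetric, cyclic identity) and `T` symmetric, the tensor
`R = R(λ,e,R₀,P,T)` defined above satisfies the first Bianchi identity
`R(U,V)W + R(V,W)U + R(W,U)V = 0` for all `U, V, W ∈ ℝ^{1,n+1}`. -/
theorem stmt17 (n : ℕ) (lam : ℝ) (ev : EuclideanSpace ℝ (Fin n))
    (R0 : EuclideanSpace ℝ (Fin n) →ₗ[ℝ] EuclideanSpace ℝ (Fin n) →ₗ[ℝ]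
      EuclideanSpace ℝ (Fin n) →ₗ[ℝ] EuclideanSpace ℝ (Fin n))
    (P : EuclideanSpace ℝ (Fin n) →ₗ[ℝ]
      EuclideanSpace ℝ (Fin n) →ₗ[ℝ] EuclideanSpace ℝ (Fin n))
    (T : EuclideanSpace ℝ (Fin n) →ₗ[ℝ] EuclideanSpace ℝ (Fin n))
    (hR0skew : ∀ x y, R0 x y = -R0 y x)
    (hR0val : ∀ x y z u, ⟪R0 x y z, u⟫ + ⟪z, R0 x y u⟫ = 0)
    (hR0B : ∀ x y z, R0 x y z + R0 y z x + R0 z x y = 0)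
    (hPval : ∀ x y z, ⟪P x y, z⟫ + ⟪y, P x z⟫ = 0)
    (hPcyc : ∀ x y z, ⟪P x y, z⟫ + ⟪P y z, x⟫ + ⟪P z x, y⟫ = 0)
    (hT : ∀ x y, ⟪T x, y⟫ = ⟪x, T y⟫) :
    ∀ U V W : ℝ × EuclideanSpace ℝ (Fin n) × ℝ,
      Rfun n lam ev R0 P T U V W + Rfun n lam ev R0 P T V W U
        + Rfun n lam ev R0 P T W U V = 0 := by
  rintro ⟨u1, u2, u3⟩ ⟨v1, v2, v3⟩ ⟨w1, w2, w3⟩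
  simp only [Rfun, simMat, Prod.mk_add_mk, Prod.mk_eq_zero, Prod.fst_add, Prod.snd_add,
    inner_add_left, inner_sub_left, real_inner_smul_left, map_add, map_sub, map_smul,
    LinearMap.add_apply, LinearMap.sub_apply, LinearMap.smul_apply]
  refine ⟨?_, ?_, by ring⟩
  · linear_combination hPcyc v2 u2 w2 - hPcyc u2 v2 w2
      + v3 * (hT u2 w2 + real_inner_comm u2 (T w2))
      + u3 * (hT w2 v2 + real_inner_comm w2 (T v2))
      + w3 * (hT v2 u2 + real_inner_comm v2 (T u2))
      + 2 * v3 * real_inner_comm (T w2) u2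
      + 2 * u3 * real_inner_comm (T v2) w2
      + 2 * w3 * real_inner_comm (T u2) v2
  · have h := hR0B u2 v2 w2
    linear_combination (norm := module) h
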